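/- For two one-dimensional probability measures μ and ν with cumulative distribution functions F_μ, F_ν, the p-Wasserstein distance admits the closed form W_p(μ,ν) = (∫₀¹ |F_μ^{-1}(z) − F_ν^{-1}(z)|^p dz)^{1/p}, where F^{-1}(z) = inf{x : F(x) ≥ z} is the quantile function. -/

import Mathlib

open MeasureTheory Set Filter ProbabilityTheory intervalIntegral
open scoped Topology ENNReal

noncomputable section
set_option linter.unusedSectionVars false
set_option maxHeartbeats 1000000

namespace W1D


/-- quantile function -/
def quant (μ : Measure ℝ) (z : ℝ) : ℝ := sInf {x : ℝ | z ≤ (μ (Set.Iic x)).toReal}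

variable (μ : Measure ℝ) [IsProbabilityMeasure μ]

lemma quant_eq_cdf : quant μ = fun z => sInf {x : ℝ | z ≤ cdf μ x} := by
  funext z
  simp only [quant, cdf_eq_real, measureReal_def]

lemma quant_set_nonempty {z : ℝ} (hz : z < 1) : {x : ℝ | z ≤ cdf μ x}.Nonempty := by
  have := (tendsto_cdf_atTop μ).eventually (eventually_ge_nhds hz)
  exact this.exists

lemma quant_set_bddBelow {z : ℝ} (hz : 0 < z) : BddBelow {x : ℝ | z ≤ cdf μ x} := by
  have := (tendsto_cdf_atBot μ).eventually (eventually_lt_nhds hz)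
  obtain ⟨x₀, hx₀⟩ := this.exists_forall_of_atBot
  refine ⟨x₀, fun x hx => ?_⟩
  by_contra h
  exact absurd hx (not_le.mpr (hx₀ x (le_of_not_ge h)))

lemma le_cdf_quant {z : ℝ} (hz : z ∈ Ioo (0:ℝ) 1) : z ≤ cdf μ (quant μ z) := by
  rw [quant_eq_cdf]
  set S := {x : ℝ | z ≤ cdf μ x} with hS
  set a := sInf S with ha
  by_contra h
  push_neg at h
  have hrc : ContinuousWithinAt (cdf μ) (Ici a) a := (cdf μ).right_continuous a
  have hev : ∀ᶠ x in 𝓝[Ici a] a, cdf μ x < z := hrc.eventually (eventually_lt_nhds h)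
  obtain ⟨u, hu, hsub⟩ := mem_nhdsGE_iff_exists_Ico_subset.mp hev
  obtain ⟨s, hsS, hsu⟩ :=
    (csInf_lt_iff (quant_set_bddBelow μ hz.1) (quant_set_nonempty μ hz.2)).mp hu
  have hlt : cdf μ s < z := hsub ⟨csInf_le (quant_set_bddBelow μ hz.1) hsS, hsu⟩
  have hge : z ≤ cdf μ s := hsS
  exact absurd hge (not_le.mpr hlt)

lemma quant_le_iff {z x : ℝ} (hz : z ∈ Ioo (0:ℝ) 1) :
    quant μ z ≤ x ↔ z ≤ cdf μ x := by
  constructor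
  · intro h
    exact le_trans (le_cdf_quant μ hz) (monotone_cdf μ h)
  · intro h
    rw [quant_eq_cdf]
    exact csInf_le (quant_set_bddBelow μ hz.1) h

lemma quant_monotoneOn : MonotoneOn (quant μ) (Ioo (0:ℝ) 1) := by
  intro z₁ h₁ z₂ h₂ h
  rw [quant_eq_cdf]
  exact csInf_le_csInf (quant_set_bddBelow μ h₁.1) (quant_set_nonempty μ h₂.2)
    (fun x hx => le_trans h hx)

/-- extended quantile function, zero outside `(0,1)` -/
def qext (μ : Measure ℝ) (z : ℝ) : ℝ := if z ∈ Ioo (0:ℝ) 1 then quant μ z else 0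

lemma qext_eq_quant {z : ℝ} (hz : z ∈ Ioo (0:ℝ) 1) : qext μ z = quant μ z := if_pos hz

lemma measurable_qext : Measurable (qext μ) := by
  apply measurable_of_Iic
  intro x
  have : qext μ ⁻¹' Iic x =
      (Ioo (0:ℝ) 1 ∩ Iic (cdf μ x)) ∪ (if (0:ℝ) ≤ x then (Ioo (0:ℝ) 1)ᶜ else ∅) := by
    ext z
    by_cases hz : z ∈ Ioo (0:ℝ) 1
    · have h1 : qext μ z ≤ x ↔ z ≤ cdf μ x := by rw [qext_eq_quant μ hz, quant_le_iff μ hz]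
      have h2 : z ∉ (if (0:ℝ) ≤ x then (Ioo (0:ℝ) 1)ᶜ else ∅) := by
        split
        · simpa using hz
        · simp
      simp only [mem_preimage, mem_Iic, mem_union, mem_inter_iff]
      constructor
      · intro h; exact Or.inl ⟨hz, h1.mp h⟩
      · rintro (⟨_, h⟩ | h)
        · exact h1.mpr h
        · exact absurd h h2
    · have h0 : qext μ z = 0 := if_neg hz
      simp only [mem_preimage, mem_Iic, mem_union, mem_inter_iff, h0]
      constructor
      · intro h
        right
        rw [if_pos h]
        simpa using hz
      · rintro (⟨h, _⟩ | h)
        · exact absurd h hz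
        · by_contra hx
          rw [if_neg (by exact fun hc => hx hc)] at h
          exact h
  rw [this]
  refine (measurableSet_Ioo.inter measurableSet_Iic).union ?_
  split
  · exact measurableSet_Ioo.compl
  · exact MeasurableSet.empty

instance : IsProbabilityMeasure (volume.restrict (Ioo (0:ℝ) 1)) := by
  constructor
  rw [Measure.restrict_apply_univ, Real.volume_Ioo]
  norm_num

lemma map_qext : Measure.map (qext μ) (volume.restrict (Ioo (0:ℝ) 1)) = μ := by
  have hprob : IsProbabilityMeasure (Measure.map (qext μ) (volume.restrict (Ioo (0:ℝ) 1))) :=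
    Measure.isProbabilityMeasure_map (measurable_qext μ).aemeasurable
  refine Measure.ext_of_Iic _ _ (fun x => ?_)
  rw [Measure.map_apply (measurable_qext μ) measurableSet_Iic, Measure.restrict_apply
    ((measurable_qext μ) measurableSet_Iic)]
  have hset : qext μ ⁻¹' Iic x ∩ Ioo (0:ℝ) 1 = {z ∈ Ioo (0:ℝ) 1 | z ≤ cdf μ x} := by
    ext z
    simp only [mem_inter_iff, mem_preimage, mem_Iic, mem_setOf_eq]
    constructor
    · rintro ⟨h1, h2⟩
      refine ⟨h2, ?_⟩
      rw [qext_eq_quant μ h2, quant_le_iff μ h2] at h1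
      exact h1
    · rintro ⟨h1, h2⟩
      refine ⟨?_, h1⟩
      rw [qext_eq_quant μ h1, quant_le_iff μ h1]
      exact h2
  rw [hset]
  have h0 : 0 ≤ cdf μ x := cdf_nonneg μ x
  have h1 : cdf μ x ≤ 1 := cdf_le_one μ x
  have hsub1 : Ioo (0:ℝ) (cdf μ x) ⊆ {z ∈ Ioo (0:ℝ) 1 | z ≤ cdf μ x} := by
    intro z hz
    exact ⟨⟨hz.1, lt_of_lt_of_le hz.2 h1⟩, hz.2.le⟩
  have hsub2 : {z ∈ Ioo (0:ℝ) 1 | z ≤ cdf μ x} ⊆ Icc (0:ℝ) (cdf μ x) := by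
    intro z hz
    exact ⟨hz.1.1.le, hz.2⟩
  have hmeas : volume {z ∈ Ioo (0:ℝ) 1 | z ≤ cdf μ x} = ENNReal.ofReal (cdf μ x) := by
    refine le_antisymm ?_ ?_
    · calc volume {z ∈ Ioo (0:ℝ) 1 | z ≤ cdf μ x} ≤ volume (Icc (0:ℝ) (cdf μ x)) :=
        measure_mono hsub2
      _ = ENNReal.ofReal (cdf μ x) := by rw [Real.volume_Icc]; ring_nf
    · calc ENNReal.ofReal (cdf μ x) = volume (Ioo (0:ℝ) (cdf μ x)) := by
            rw [Real.volume_Ioo]; ring_nf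
      _ ≤ volume {z ∈ Ioo (0:ℝ) 1 | z ≤ cdf μ x} := measure_mono hsub1
  rw [hmeas, ofReal_cdf]



/-- the cost profile -/
def phi (p u : ℝ) : ℝ := |u| ^ p

/-- its (right-continuous) derivative -/
def g (p u : ℝ) : ℝ := if u < 0 then -(p * (-u) ^ (p-1)) else p * u ^ (p-1)

variable {p : ℝ}

lemma phi_nonneg (u : ℝ) : 0 ≤ phi p u := Real.rpow_nonneg (abs_nonneg u) p

lemma phi_zero (hp : 1 ≤ p) : phi p 0 = 0 := by
  simp [phi]
  exact Real.zero_rpow (by linarith)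

lemma phi_neg (u : ℝ) : phi p (-u) = phi p u := by simp [phi]

lemma phi_cont (hp : 1 ≤ p) : Continuous (phi p) :=
  continuous_abs.rpow_const (fun x => Or.inr (le_trans zero_le_one hp))

lemma g_mono (hp : 1 ≤ p) : Monotone (g p) := by
  have hp0 : 0 < p := by linarith
  intro u v huv
  rcases lt_or_ge u 0 with hu | hu
  · rcases lt_or_ge v 0 with hv | hv
    · rw [g, if_pos hu, g, if_pos hv, neg_le_neg_iff]
      have := Real.rpow_le_rpow (z := p - 1) (by linarith) (show -v ≤ -u by linarith)
        (by linarith)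
      exact mul_le_mul_of_nonneg_left this hp0.le
    · rw [g, if_pos hu, g, if_neg (not_lt.mpr hv)]
      have h1 : 0 ≤ p * v ^ (p-1) := mul_nonneg hp0.le (Real.rpow_nonneg hv _)
      have h2 : 0 ≤ p * (-u) ^ (p-1) := mul_nonneg hp0.le (Real.rpow_nonneg (by linarith) _)
      linarith
  · rw [g, if_neg (not_lt.mpr hu), g, if_neg (not_lt.mpr (le_trans hu huv))]
    have := Real.rpow_le_rpow (z := p - 1) hu huv (by linarith)
    exact mul_le_mul_of_nonneg_left this hp0.le

lemma g_itg (hp : 1 ≤ p) (a b : ℝ) : IntervalIntegrable (g p) volume a b :=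
  (g_mono hp).intervalIntegrable

lemma integral_g_zero (hp : 1 ≤ p) (b : ℝ) : ∫ u in (0:ℝ)..b, g p u = phi p b := by
  have hp0 : p ≠ 0 := by linarith
  have key : ∀ c : ℝ, 0 ≤ c → ∫ u in (0:ℝ)..c, p * u ^ (p-1) = c ^ p := by
    intro c hc
    rw [intervalIntegral.integral_const_mul, integral_rpow (Or.inl (by linarith))]
    rw [Real.zero_rpow (show p - 1 + 1 ≠ 0 by intro h; apply hp0; linarith)]
    have : p - 1 + 1 = p := by ring
    rw [this]
    field_simp
    ring
  rcases le_or_gt 0 b with hb | hb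
  · have hEq : EqOn (g p) (fun u => p * u ^ (p-1)) (uIcc 0 b) := by
      intro u hu
      rw [uIcc_of_le hb] at hu
      exact if_neg (not_lt.mpr hu.1)
    rw [integral_congr hEq, key b hb, phi, abs_of_nonneg hb]
  · have hae : ∀ᵐ u : ℝ ∂volume, u ∈ Set.uIoc 0 b → g p u = (fun u => (fun v => -(p * v ^ (p-1))) (-u)) u := by
      have h0 : (volume : Measure ℝ) {(0:ℝ)} = 0 := Real.volume_singleton
      have hne : ∀ᵐ u : ℝ ∂volume, u ≠ 0 := by
        rw [ae_iff]
        simpa [Set.setOf_eq_eq_singleton] using h0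
      filter_upwards [hne] with u hu _
      rcases lt_or_ge u 0 with h | h
      · exact if_pos h
      · have : u ∈ Set.uIoc 0 b := by assumption
        rw [Set.uIoc_of_ge hb.le] at this
        exact absurd (lt_of_le_of_ne this.2 hu) (not_lt.mpr h)
    rw [intervalIntegral.integral_congr_ae hae, intervalIntegral.integral_comp_neg (fun v => -(p * v ^ (p-1)))]
    rw [neg_zero, intervalIntegral.integral_neg]
    have : ∫ u in (-b)..(0:ℝ), p * u ^ (p-1) = -∫ u in (0:ℝ)..(-b), p * u ^ (p-1) := by
      rw [intervalIntegral.integral_symm]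
    rw [this, neg_neg, key (-b) (by linarith), phi, abs_of_neg hb]

lemma integral_g (hp : 1 ≤ p) (a b : ℝ) : ∫ u in a..b, g p u = phi p b - phi p a := by
  have h := intervalIntegral.integral_add_adjacent_intervals (g_itg hp a 0) (g_itg hp 0 b)
  have h1 : ∫ u in a..(0:ℝ), g p u = -phi p a := by
    rw [intervalIntegral.integral_symm, integral_g_zero hp]
  rw [h1, integral_g_zero hp] at h
  rw [← h]; ring

lemma phi_bound (hp : 1 ≤ p) (x y : ℝ) : phi p (x - y) ≤ 2 ^ p * (phi p x + phi p y) := by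
  have hp0 : 0 ≤ p := by linarith
  have h1 : |x - y| ≤ 2 * max |x| |y| := by
    calc |x - y| ≤ |x| + |y| := abs_sub _ _
    _ ≤ 2 * max |x| |y| := by
        have := le_max_left |x| |y|; have := le_max_right |x| |y|; linarith
  have h2 : phi p (x - y) ≤ (2 * max |x| |y|) ^ p :=
    Real.rpow_le_rpow (abs_nonneg _) h1 hp0
  have h3 : (2 * max |x| |y|) ^ p = 2 ^ p * (max |x| |y|) ^ p :=
    Real.mul_rpow (by norm_num) (le_max_of_le_left (abs_nonneg x))
  have h4 : (max |x| |y|) ^ p ≤ phi p x + phi p y := by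
    rcases max_cases |x| |y| with ⟨h, _⟩ | ⟨h, _⟩ <;> rw [h]
    · have := phi_nonneg (p := p) y; unfold phi at this ⊢; linarith
    · have := phi_nonneg (p := p) x; unfold phi at this ⊢; linarith
  calc phi p (x - y) ≤ 2 ^ p * (max |x| |y|) ^ p := by rw [← h3]; exact h2
  _ ≤ 2 ^ p * (phi p x + phi p y) := by
      have : (0:ℝ) ≤ 2 ^ p := Real.rpow_nonneg (by norm_num) p
      exact mul_le_mul_of_nonneg_left h4 this

/-- signed indicator -/
def e (x s : ℝ) : ℝ := (if s ≤ x then 1 else 0) - (if s ≤ 0 then 1 else 0)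

lemma e_eq_indicator (x s : ℝ) :
    e x s = (Ioc (0:ℝ) x).indicator (fun _ => (1:ℝ)) s
      - (Ioc x (0:ℝ)).indicator (fun _ => (1:ℝ)) s := by
  unfold e Set.indicator
  split_ifs with h1 h2 h3 h4 h5 h6 h7 <;>
    simp_all [mem_Ioc] <;> linarith

lemma e_abs_le_one (x s : ℝ) : |e x s| ≤ 1 := by
  unfold e; split_ifs <;> norm_num

lemma e_support {x s : ℝ} (h : e x s ≠ 0) : |s| ≤ |x| := by
  unfold e at h
  by_cases h1 : s ≤ x <;> by_cases h2 : s ≤ 0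
  · simp [h1, h2] at h
  · push_neg at h2
    rw [abs_of_pos h2, abs_of_nonneg (h2.le.trans h1)]
    exact h1
  · push_neg at h1
    rw [abs_of_nonpos h2, abs_of_neg (lt_of_lt_of_le h1 h2 : x < 0)]
    linarith
  · simp [h1, h2] at h

lemma e_sign_nonneg {x : ℝ} (hx : 0 ≤ x) (s : ℝ) : 0 ≤ e x s := by
  unfold e
  split_ifs with h1 h2 h3 <;> norm_num
  exact absurd (le_trans h3 hx) h1

lemma e_sign_nonpos {x : ℝ} (hx : x ≤ 0) (s : ℝ) : e x s ≤ 0 := by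
  unfold e
  split_ifs with h1 h2 h3 <;> norm_num
  exact absurd (le_trans h1 hx) h2

lemma measurable_e_right (x : ℝ) : Measurable (e x) := by
  unfold e
  exact (Measurable.ite measurableSet_Iic measurable_const measurable_const).sub
    (Measurable.ite measurableSet_Iic measurable_const measurable_const)

lemma measurable_e : Measurable (fun q : ℝ × ℝ => e q.1 q.2) := by
  unfold e
  have h1 : MeasurableSet {q : ℝ × ℝ | q.2 ≤ q.1} :=
    measurableSet_le measurable_snd measurable_fst
  have h2 : MeasurableSet {q : ℝ × ℝ | q.2 ≤ 0} :=
    measurableSet_le measurable_snd measurable_const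
  exact (Measurable.ite h1 measurable_const measurable_const).sub
    (Measurable.ite h2 measurable_const measurable_const)

variable {p : ℝ}

/-- the Stieltjes function associated to `g` -/
def G (p : ℝ) (hp : 1 ≤ p) : StieltjesFunction ℝ where
  toFun := g p
  mono' := g_mono hp
  right_continuous' := by
    intro x
    have hcpos : Continuous (fun u : ℝ => p * u ^ (p-1)) := by
      apply continuous_const.mul
      apply continuous_iff_continuousAt.mpr
      intro u
      exact Real.continuousAt_rpow_const u (p-1) (Or.inr (by linarith))
    have hcneg : Continuous (fun u : ℝ => -(p * (-u) ^ (p-1))) := by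
      apply Continuous.neg
      apply continuous_const.mul
      apply continuous_iff_continuousAt.mpr
      intro u
      exact (Real.continuousAt_rpow_const (-u) (p-1) (Or.inr (by linarith))).comp
        (continuous_neg.continuousAt)
    rcases lt_or_ge x 0 with hx | hx
    · have hev : (fun u : ℝ => -(p * (-u) ^ (p-1))) =ᶠ[𝓝 x] g p := by
        filter_upwards [eventually_lt_nhds hx] with u hu
        exact (if_pos hu).symm
      exact (hcneg.continuousAt.congr hev).continuousWithinAt
    · apply (hcpos.continuousWithinAt).congr
      · intro u hu
        exact if_neg (not_lt.mpr (le_trans hx hu))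
      · exact if_neg (not_lt.mpr hx)

/-- the second-derivative measure of `phi` -/
def sigma (p : ℝ) (hp : 1 ≤ p) : Measure ℝ := (G p hp).measure

lemma sigma_Ioc (hp : 1 ≤ p) (a b : ℝ) :
    sigma p hp (Ioc a b) = ENNReal.ofReal (g p b - g p a) :=
  (G p hp).measure_Ioc a b

instance (hp' : 1 ≤ p) : SFinite (sigma p hp') := by unfold sigma; infer_instance

lemma e_shift (x t u : ℝ) :
    e x (t + u) = (Ioc (-t) (x - t)).indicator (fun _ => (1:ℝ)) u
      - (Ioc (x - t) (-t)).indicator (fun _ => (1:ℝ)) u := by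
  by_cases h1 : t + u ≤ x <;> by_cases h2 : t + u ≤ 0
  · rw [e, if_pos h1, if_pos h2,
      Set.indicator_of_notMem (by rw [mem_Ioc]; push_neg; intro ha; linarith),
      Set.indicator_of_notMem (by rw [mem_Ioc]; push_neg; intro ha; linarith)]
    norm_num
  · rw [e, if_pos h1, if_neg h2,
      Set.indicator_of_mem (by rw [mem_Ioc]; constructor <;> linarith),
      Set.indicator_of_notMem (by rw [mem_Ioc]; push_neg; intro ha; linarith)]
  · rw [e, if_neg h1, if_pos h2,
      Set.indicator_of_notMem (by rw [mem_Ioc]; push_neg; intro ha; linarith),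
      Set.indicator_of_mem (by rw [mem_Ioc]; constructor <;> linarith)]
  · rw [e, if_neg h1, if_neg h2,
      Set.indicator_of_notMem (by rw [mem_Ioc]; push_neg; intro ha; linarith),
      Set.indicator_of_notMem (by rw [mem_Ioc]; push_neg; intro ha; linarith)]

lemma integrable_e_shift (hp : 1 ≤ p) (x t : ℝ) :
    Integrable (fun u => e x (t + u)) (sigma p hp) := by
  have h1 : Integrable ((Ioc (-t) (x - t)).indicator (fun _ => (1:ℝ))) (sigma p hp) := by
    rw [integrable_indicator_iff measurableSet_Ioc]
    refine (integrableOn_const_iff (C := (1:ℝ))).mpr (Or.inr ?_)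
    rw [sigma_Ioc]
    exact ENNReal.ofReal_lt_top
  have h2 : Integrable ((Ioc (x - t) (-t)).indicator (fun _ => (1:ℝ))) (sigma p hp) := by
    rw [integrable_indicator_iff measurableSet_Ioc]
    refine (integrableOn_const_iff (C := (1:ℝ))).mpr (Or.inr ?_)
    rw [sigma_Ioc]
    exact ENNReal.ofReal_lt_top
  have := h1.sub h2
  refine this.congr ?_
  filter_upwards with u
  exact (e_shift x t u).symm

lemma integral_e_shift (hp : 1 ≤ p) (x t : ℝ) :
    ∫ u, e x (t + u) ∂(sigma p hp) = g p (x - t) - g p (-t) := by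
  have h1 : Integrable ((Ioc (-t) (x - t)).indicator (fun _ => (1:ℝ))) (sigma p hp) := by
    rw [integrable_indicator_iff measurableSet_Ioc]
    refine (integrableOn_const_iff (C := (1:ℝ))).mpr (Or.inr ?_)
    rw [sigma_Ioc]; exact ENNReal.ofReal_lt_top
  have h2 : Integrable ((Ioc (x - t) (-t)).indicator (fun _ => (1:ℝ))) (sigma p hp) := by
    rw [integrable_indicator_iff measurableSet_Ioc]
    refine (integrableOn_const_iff (C := (1:ℝ))).mpr (Or.inr ?_)
    rw [sigma_Ioc]; exact ENNReal.ofReal_lt_top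
  have heq : ∫ u, e x (t + u) ∂(sigma p hp)
      = ∫ u, ((Ioc (-t) (x - t)).indicator (fun _ => (1:ℝ)) u
          - (Ioc (x - t) (-t)).indicator (fun _ => (1:ℝ)) u) ∂(sigma p hp) := by
    apply MeasureTheory.integral_congr_ae
    filter_upwards with u
    exact e_shift x t u
  rw [heq, integral_sub h1 h2, MeasureTheory.integral_indicator measurableSet_Ioc,
    MeasureTheory.integral_indicator measurableSet_Ioc, setIntegral_const, setIntegral_const,
    measureReal_def, measureReal_def, sigma_Ioc, sigma_Ioc, ENNReal.toReal_ofReal', ENNReal.toReal_ofReal']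
  have : g p (-t) - g p (x - t) = -(g p (x - t) - g p (-t)) := by ring
  rw [smul_eq_mul, smul_eq_mul, mul_one, mul_one, this, max_zero_sub_eq_self]

/-- measure on the (s,t) plane: image of dt ⊗ dσ(u) under (t,u) ↦ (t+u, t) -/
def rho (p : ℝ) (hp : 1 ≤ p) : Measure (ℝ × ℝ) :=
  ((volume : Measure ℝ).prod (sigma p hp)).map (fun q => (q.1 + q.2, q.1))

instance rho_sfinite (hp : 1 ≤ p) : SFinite (rho p hp) := by unfold rho; infer_instance

lemma measurable_rho_map : Measurable (fun q : ℝ × ℝ => (q.1 + q.2, q.1)) :=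
  (measurable_fst.add measurable_snd).prodMk measurable_fst

lemma measurable_ee (x y : ℝ) : Measurable (fun st : ℝ × ℝ => e x st.1 * e y st.2) :=
  ((measurable_e_right x).comp measurable_fst).mul ((measurable_e_right y).comp measurable_snd)

lemma measurable_ee_base (x y : ℝ) :
    Measurable (fun q : ℝ × ℝ => e x (q.1 + q.2) * e y q.1) :=
  ((measurable_e_right x).comp (measurable_fst.add measurable_snd)).mul
    ((measurable_e_right y).comp measurable_fst)

lemma integrable_ee_base (hp : 1 ≤ p) (x y : ℝ) :
    Integrable (fun q : ℝ × ℝ => e x (q.1 + q.2) * e y q.1)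
      ((volume : Measure ℝ).prod (sigma p hp)) := by
  refine ⟨(measurable_ee_base x y).aestronglyMeasurable, ?_⟩
  rw [hasFiniteIntegral_iff_norm]
  set B : Set (ℝ × ℝ) := Icc (-|y|) |y| ×ˢ Icc (-(|x|+|y|)) (|x|+|y|) with hB
  have hBm : MeasurableSet B := measurableSet_Icc.prod measurableSet_Icc
  have hbound : ∀ q : ℝ × ℝ,
      ENNReal.ofReal ‖e x (q.1 + q.2) * e y q.1‖ ≤ B.indicator (fun _ => (1:ℝ≥0∞)) q := by
    intro q
    by_cases h : e x (q.1 + q.2) * e y q.1 = 0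
    · rw [h]; simp
    · have hx' : e x (q.1 + q.2) ≠ 0 := fun hc => h (by rw [hc]; ring)
      have hy' : e y q.1 ≠ 0 := fun hc => h (by rw [hc]; ring)
      have h1 := e_support hx'
      have h2 := e_support hy'
      have hmem : q ∈ B := by
        constructor
        · exact abs_le.mp h2
        · have : |q.2| ≤ |x| + |y| := by
            have : |q.2| = |(q.1 + q.2) - q.1| := by ring_nf
            rw [this]
            calc |(q.1 + q.2) - q.1| ≤ |q.1 + q.2| + |q.1| := abs_sub _ _
            _ ≤ |x| + |y| := add_le_add h1 h2
          exact abs_le.mp this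
      rw [Set.indicator_of_mem hmem]
      refine ENNReal.ofReal_le_of_le_toReal ?_
      rw [ENNReal.toReal_one, norm_mul, Real.norm_eq_abs, Real.norm_eq_abs]
      exact mul_le_one₀ (e_abs_le_one x _) (abs_nonneg _) (e_abs_le_one y _)
  calc ∫⁻ q, ENNReal.ofReal ‖e x (q.1 + q.2) * e y q.1‖ ∂((volume : Measure ℝ).prod (sigma p hp))
      ≤ ∫⁻ q, B.indicator (fun _ => (1:ℝ≥0∞)) q ∂((volume : Measure ℝ).prod (sigma p hp)) :=
        lintegral_mono hbound
  _ = ((volume : Measure ℝ).prod (sigma p hp)) B := by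
      rw [lintegral_indicator hBm]; simp
  _ < ∞ := by
      rw [hB, Measure.prod_prod]
      apply ENNReal.mul_lt_top
      · rw [Real.volume_Icc]; exact ENNReal.ofReal_lt_top
      · calc sigma p hp (Icc (-(|x|+|y|)) (|x|+|y|))
            ≤ sigma p hp (Ioc (-(|x|+|y|)-1) (|x|+|y|)) := by
              apply measure_mono
              intro u hu
              exact ⟨by linarith [hu.1], hu.2⟩
        _ < ∞ := by rw [sigma_Ioc]; exact ENNReal.ofReal_lt_top

lemma integrable_ee (hp : 1 ≤ p) (x y : ℝ) :
    Integrable (fun st : ℝ × ℝ => e x st.1 * e y st.2) (rho p hp) := by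
  rw [rho, integrable_map_measure (measurable_ee x y).aestronglyMeasurable
    measurable_rho_map.aemeasurable]
  exact integrable_ee_base hp x y

lemma integral_ee (hp : 1 ≤ p) (x y : ℝ) :
    ∫ st, e x st.1 * e y st.2 ∂(rho p hp)
      = phi p x + phi p (-y) - phi p (x - y) := by
  rw [rho, integral_map measurable_rho_map.aemeasurable
    (measurable_ee x y).aestronglyMeasurable]
  rw [MeasureTheory.integral_prod _ (integrable_ee_base hp x y)]
  have hinner : ∀ t : ℝ, ∫ u, e x (t + u) * e y t ∂(sigma p hp)
      = (g p (x - t) - g p (-t)) * e y t := by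
    intro t
    rw [MeasureTheory.integral_mul_const, integral_e_shift hp]
  simp_rw [hinner]
  -- now the outer integral
  set H : ℝ → ℝ := fun t => g p (x - t) - g p (-t) with hH
  have i1 : IntervalIntegrable (fun t => g p (x - t)) volume 0 y :=
    Antitone.intervalIntegrable (fun a b hab => g_mono hp (by linarith : x - b ≤ x - a))
  have i2 : IntervalIntegrable (fun t => g p (-t)) volume 0 y :=
    Antitone.intervalIntegrable (fun a b hab => g_mono hp (by linarith : -b ≤ -a))
  have hIoc1 : IntegrableOn H (Ioc 0 y) volume := i1.1.sub i2.1
  have hIoc2 : IntegrableOn H (Ioc y 0) volume := i1.2.sub i2.2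
  have hptw : ∀ t : ℝ, H t * e y t
      = (Ioc (0:ℝ) y).indicator H t - (Ioc y (0:ℝ)).indicator H t := by
    intro t
    rw [e_eq_indicator]
    unfold Set.indicator
    split_ifs <;> simp_all <;> ring
  have hstep : (∫ t, H t * e y t) = ∫ t, ((Ioc (0:ℝ) y).indicator H t - (Ioc y (0:ℝ)).indicator H t) := by
    apply MeasureTheory.integral_congr_ae
    filter_upwards with t
    exact hptw t
  have hcomm : ∀ t : ℝ, (g p (x - t) - g p (-t)) * e y t = H t * e y t := fun t => rfl
  simp_rw [hcomm]
  rw [hstep, integral_sub ((integrable_indicator_iff measurableSet_Ioc).mpr hIoc1)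
    ((integrable_indicator_iff measurableSet_Ioc).mpr hIoc2),
    MeasureTheory.integral_indicator measurableSet_Ioc, MeasureTheory.integral_indicator measurableSet_Ioc]
  have hsplit : (∫ t in Ioc (0:ℝ) y, H t) - ∫ t in Ioc y (0:ℝ), H t = ∫ t in (0:ℝ)..y, H t := by
    rcases le_total (0:ℝ) y with hy | hy
    · rw [Ioc_eq_empty (not_lt.mpr hy), MeasureTheory.setIntegral_empty,
        intervalIntegral.integral_of_le hy]
      ring
    · rw [Ioc_eq_empty (not_lt.mpr hy), MeasureTheory.setIntegral_empty,
        intervalIntegral.integral_symm, intervalIntegral.integral_of_le hy]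
      ring
  rw [hsplit]
  have hHsub : ∫ t in (0:ℝ)..y, H t
      = (∫ t in (0:ℝ)..y, g p (x - t)) - ∫ t in (0:ℝ)..y, g p (-t) :=
    intervalIntegral.integral_sub i1 i2
  rw [hHsub, intervalIntegral.integral_comp_sub_left (fun v => g p v) x,
    intervalIntegral.integral_comp_neg (fun v => g p v)]
  rw [sub_zero, neg_zero, integral_g hp, integral_g hp, phi_zero hp]
  ring


lemma integral_abs_ee (hp : 1 ≤ p) (x y : ℝ) :
    ∫ st, ‖e x st.1 * e y st.2‖ ∂(rho p hp)
      = |phi p x + phi p (-y) - phi p (x - y)| := by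
  rcases le_total 0 x with hx | hx <;> rcases le_total 0 y with hy | hy
  · have hpt : ∀ st : ℝ × ℝ, ‖e x st.1 * e y st.2‖ = e x st.1 * e y st.2 := fun st =>
      Real.norm_of_nonneg (mul_nonneg (e_sign_nonneg hx _) (e_sign_nonneg hy _))
    simp_rw [hpt]
    rw [integral_ee hp, abs_of_nonneg]
    rw [← integral_ee hp x y]
    exact integral_nonneg (fun st => mul_nonneg (e_sign_nonneg hx _) (e_sign_nonneg hy _))
  · have hpt : ∀ st : ℝ × ℝ, ‖e x st.1 * e y st.2‖ = -(e x st.1 * e y st.2) := fun st =>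
      Real.norm_of_nonpos (mul_nonpos_iff.mpr (Or.inl ⟨e_sign_nonneg hx _, e_sign_nonpos hy _⟩))
    simp_rw [hpt]
    rw [MeasureTheory.integral_neg, integral_ee hp, abs_of_nonpos]
    rw [← integral_ee hp x y]
    exact integral_nonpos (fun st =>
      mul_nonpos_iff.mpr (Or.inl ⟨e_sign_nonneg hx _, e_sign_nonpos hy _⟩))
  · have hpt : ∀ st : ℝ × ℝ, ‖e x st.1 * e y st.2‖ = -(e x st.1 * e y st.2) := fun st =>
      Real.norm_of_nonpos (mul_nonpos_iff.mpr (Or.inr ⟨e_sign_nonpos hx _, e_sign_nonneg hy _⟩))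
    simp_rw [hpt]
    rw [MeasureTheory.integral_neg, integral_ee hp, abs_of_nonpos]
    rw [← integral_ee hp x y]
    exact integral_nonpos (fun st =>
      mul_nonpos_iff.mpr (Or.inr ⟨e_sign_nonpos hx _, e_sign_nonneg hy _⟩))
  · have hpt : ∀ st : ℝ × ℝ, ‖e x st.1 * e y st.2‖ = e x st.1 * e y st.2 := fun st =>
      Real.norm_of_nonneg (mul_nonneg_iff.mpr (Or.inr ⟨e_sign_nonpos hx _, e_sign_nonpos hy _⟩))
    simp_rw [hpt]
    rw [integral_ee hp, abs_of_nonneg]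
    rw [← integral_ee hp x y]
    exact integral_nonneg (fun st =>
      mul_nonneg_iff.mpr (Or.inr ⟨e_sign_nonpos hx _, e_sign_nonpos hy _⟩))

section Coupling

variable {m1 m2 : Measure ℝ} [IsProbabilityMeasure m1] [IsProbabilityMeasure m2]

lemma integrable_phi_fst (hp : 1 ≤ p) (h1 : Integrable (phi p) m1)
    (γ : Measure (ℝ × ℝ)) [IsProbabilityMeasure γ] (hγ1 : γ.map Prod.fst = m1) :
    Integrable (fun z : ℝ × ℝ => phi p z.1) γ := by
  have h : Integrable (phi p) (γ.map Prod.fst) := hγ1 ▸ h1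
  exact (integrable_map_measure (phi_cont hp).aestronglyMeasurable
    measurable_fst.aemeasurable).mp h

lemma integrable_phi_snd (hp : 1 ≤ p) (h2 : Integrable (phi p) m2)
    (γ : Measure (ℝ × ℝ)) [IsProbabilityMeasure γ] (hγ2 : γ.map Prod.snd = m2) :
    Integrable (fun z : ℝ × ℝ => phi p z.2) γ := by
  have h : Integrable (phi p) (γ.map Prod.snd) := hγ2 ▸ h2
  exact (integrable_map_measure (phi_cont hp).aestronglyMeasurable
    measurable_snd.aemeasurable).mp h

lemma coupling_cost_integrable (hp : 1 ≤ p)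
    (h1 : Integrable (phi p) m1) (h2 : Integrable (phi p) m2)
    (γ : Measure (ℝ × ℝ)) [IsProbabilityMeasure γ]
    (hγ1 : γ.map Prod.fst = m1) (hγ2 : γ.map Prod.snd = m2) :
    Integrable (fun z : ℝ × ℝ => phi p (z.1 - z.2)) γ := by
  have hf1 := integrable_phi_fst hp h1 γ hγ1
  have hf2 := integrable_phi_snd hp h2 γ hγ2
  refine Integrable.mono' ((hf1.add hf2).const_mul (2^p))
    (((phi_cont hp).comp (continuous_fst.sub continuous_snd)).aestronglyMeasurable) ?_
  filter_upwards with z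
  rw [Real.norm_of_nonneg (phi_nonneg _)]
  exact phi_bound hp _ _

lemma integrable_F (hp : 1 ≤ p)
    (h1 : Integrable (phi p) m1) (h2 : Integrable (phi p) m2)
    (γ : Measure (ℝ × ℝ)) [IsProbabilityMeasure γ]
    (hγ1 : γ.map Prod.fst = m1) (hγ2 : γ.map Prod.snd = m2) :
    Integrable (fun q : (ℝ × ℝ) × (ℝ × ℝ) => e q.1.1 q.2.1 * e q.1.2 q.2.2)
      (γ.prod (rho p hp)) := by
  have hmeas : Measurable (fun q : (ℝ × ℝ) × (ℝ × ℝ) => e q.1.1 q.2.1 * e q.1.2 q.2.2) := by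
    have hma : Measurable (fun q : (ℝ × ℝ) × (ℝ × ℝ) => e q.1.1 q.2.1) :=
      measurable_e.comp ((measurable_fst.comp measurable_fst).prodMk
        (measurable_fst.comp measurable_snd))
    have hmb : Measurable (fun q : (ℝ × ℝ) × (ℝ × ℝ) => e q.1.2 q.2.2) :=
      measurable_e.comp ((measurable_snd.comp measurable_fst).prodMk
        (measurable_snd.comp measurable_snd))
    exact hma.mul hmb
  rw [integrable_prod_iff hmeas.aestronglyMeasurable]
  constructor
  · filter_upwards with z
    exact integrable_ee hp z.1 z.2
  · have heq : (fun z : ℝ × ℝ => ∫ st, ‖e z.1 st.1 * e z.2 st.2‖ ∂(rho p hp))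
        = fun z : ℝ × ℝ => |phi p z.1 + phi p (-z.2) - phi p (z.1 - z.2)| :=
      funext (fun z => integral_abs_ee hp z.1 z.2)
    rw [heq]
    have hf1 := integrable_phi_fst hp h1 γ hγ1
    have hf2 := integrable_phi_snd hp h2 γ hγ2
    refine Integrable.mono' ((hf1.add hf2).const_mul (1 + 2^p))
      ?_ ?_
    · apply Continuous.aestronglyMeasurable
      apply Continuous.abs
      apply Continuous.sub
      · exact ((phi_cont hp).comp continuous_fst).add
          ((phi_cont hp).comp continuous_snd.neg)
      · exact (phi_cont hp).comp (continuous_fst.sub continuous_snd)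
    · filter_upwards with z
      rw [Real.norm_of_nonneg (abs_nonneg _)]
      simp only [Pi.add_apply]
      have hb := phi_bound hp z.1 z.2
      have h1' := phi_nonneg (p := p) z.1
      have h2' := phi_nonneg (p := p) z.2
      have h3' := phi_nonneg (p := p) (z.1 - z.2)
      have h4' : phi p (-z.2) = phi p z.2 := phi_neg _
      have h2p : (0:ℝ) ≤ 2 ^ p := Real.rpow_nonneg (by norm_num) p
      rw [abs_le]
      constructor <;> rw [h4'] <;> nlinarith

lemma coupling_identity (hp : 1 ≤ p)
    (h1 : Integrable (phi p) m1) (h2 : Integrable (phi p) m2)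
    (γ : Measure (ℝ × ℝ)) [IsProbabilityMeasure γ]
    (hγ1 : γ.map Prod.fst = m1) (hγ2 : γ.map Prod.snd = m2) :
    ∫ z, phi p (z.1 - z.2) ∂γ
      = (∫ u, phi p u ∂m1) + (∫ u, phi p u ∂m2)
        - ∫ st, (∫ z : ℝ × ℝ, e z.1 st.1 * e z.2 st.2 ∂γ) ∂(rho p hp) := by
  have hswap : ∫ z : ℝ × ℝ, (∫ st, e z.1 st.1 * e z.2 st.2 ∂(rho p hp)) ∂γ
      = ∫ st, (∫ z : ℝ × ℝ, e z.1 st.1 * e z.2 st.2 ∂γ) ∂(rho p hp) :=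
    integral_integral_swap (integrable_F hp h1 h2 γ hγ1 hγ2)
  have hΨeq : (fun z : ℝ × ℝ => ∫ st, e z.1 st.1 * e z.2 st.2 ∂(rho p hp))
      = fun z : ℝ × ℝ => phi p z.1 + phi p z.2 - phi p (z.1 - z.2) := by
    funext z
    rw [integral_ee hp, phi_neg]
  rw [← hswap, hΨeq]
  have hf1 := integrable_phi_fst hp h1 γ hγ1
  have hf2 := integrable_phi_snd hp h2 γ hγ2
  have hcost := coupling_cost_integrable hp h1 h2 γ hγ1 hγ2
  have hf12 : Integrable (fun z : ℝ × ℝ => phi p z.1 + phi p z.2) γ := hf1.add hf2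
  rw [integral_sub hf12 hcost, integral_add hf1 hf2]
  have hm1 : ∫ z : ℝ × ℝ, phi p z.1 ∂γ = ∫ u, phi p u ∂m1 := by
    rw [← hγ1, integral_map measurable_fst.aemeasurable (phi_cont hp).aestronglyMeasurable]
  have hm2 : ∫ z : ℝ × ℝ, phi p z.2 ∂γ = ∫ u, phi p u ∂m2 := by
    rw [← hγ2, integral_map measurable_snd.aemeasurable (phi_cont hp).aestronglyMeasurable]
  rw [hm1, hm2]
  ring

lemma integral_ee_coupling
    (γ : Measure (ℝ × ℝ)) [IsProbabilityMeasure γ]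
    (hγ1 : γ.map Prod.fst = m1) (hγ2 : γ.map Prod.snd = m2) (s t : ℝ) :
    ∫ z : ℝ × ℝ, e z.1 s * e z.2 t ∂γ
      = (γ (Ici s ×ˢ Ici t)).toReal
        - (if s ≤ 0 then (1:ℝ) else 0) * (m2 (Ici t)).toReal
        - (if t ≤ 0 then (1:ℝ) else 0) * (m1 (Ici s)).toReal
        + (if s ≤ 0 then (1:ℝ) else 0) * (if t ≤ 0 then (1:ℝ) else 0) := by
  set cs : ℝ := if s ≤ 0 then (1:ℝ) else 0 with hcs
  set ct : ℝ := if t ≤ 0 then (1:ℝ) else 0 with hct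
  set IA : ℝ × ℝ → ℝ := (Prod.fst ⁻¹' Ici s).indicator (fun _ => (1:ℝ)) with hIA
  set IB : ℝ × ℝ → ℝ := (Prod.snd ⁻¹' Ici t).indicator (fun _ => (1:ℝ)) with hIB
  set IAB : ℝ × ℝ → ℝ := (Ici s ×ˢ Ici t).indicator (fun _ => (1:ℝ)) with hIAB
  have hmA : MeasurableSet (Prod.fst ⁻¹' Ici s : Set (ℝ × ℝ)) :=
    measurable_fst measurableSet_Ici
  have hmB : MeasurableSet (Prod.snd ⁻¹' Ici t : Set (ℝ × ℝ)) :=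
    measurable_snd measurableSet_Ici
  have hmAB : MeasurableSet (Ici s ×ˢ Ici t : Set (ℝ × ℝ)) :=
    measurableSet_Ici.prod measurableSet_Ici
  have hiA : Integrable IA γ := by
    rw [hIA, integrable_indicator_iff hmA]
    exact (integrableOn_const_iff (C := (1:ℝ))).mpr (Or.inr (measure_lt_top γ _))
  have hiB : Integrable IB γ := by
    rw [hIB, integrable_indicator_iff hmB]
    exact (integrableOn_const_iff (C := (1:ℝ))).mpr (Or.inr (measure_lt_top γ _))
  have hiAB : Integrable IAB γ := by
    rw [hIAB, integrable_indicator_iff hmAB]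
    exact (integrableOn_const_iff (C := (1:ℝ))).mpr (Or.inr (measure_lt_top γ _))
  have hpt : ∀ z : ℝ × ℝ, e z.1 s * e z.2 t
      = IAB z - cs * IB z - ct * IA z + cs * ct := by
    intro z
    rw [hIA, hIB, hIAB, hcs, hct]
    unfold e Set.indicator
    simp only [mem_preimage, mem_Ici, mem_prod]
    by_cases h1 : s ≤ z.1 <;> by_cases h2 : t ≤ z.2 <;>
      simp only [h1, h2, if_true, if_false, and_true, true_and, and_false, false_and] <;>
      split_ifs <;> ring
  have : (∫ z : ℝ × ℝ, e z.1 s * e z.2 t ∂γ)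
      = ∫ z : ℝ × ℝ, (IAB z - cs * IB z - ct * IA z + cs * ct) ∂γ := by
    apply MeasureTheory.integral_congr_ae
    filter_upwards with z using hpt z
  rw [this]
  have i1 : Integrable (fun z => IAB z - cs * IB z) γ := hiAB.sub (hiB.const_mul cs)
  have i2 : Integrable (fun z => IAB z - cs * IB z - ct * IA z) γ := i1.sub (hiA.const_mul ct)
  rw [integral_add i2 (integrable_const _), integral_sub i1 (hiA.const_mul ct),
    integral_sub hiAB (hiB.const_mul cs), MeasureTheory.integral_const_mul cs IB,
    MeasureTheory.integral_const_mul ct IA, MeasureTheory.integral_const]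
  have hAB : ∫ z, IAB z ∂γ = (γ (Ici s ×ˢ Ici t)).toReal := by
    rw [hIAB, MeasureTheory.integral_indicator hmAB, setIntegral_const, smul_eq_mul, mul_one, measureReal_def]
  have hA : ∫ z, IA z ∂γ = (m1 (Ici s)).toReal := by
    rw [hIA, MeasureTheory.integral_indicator hmA, setIntegral_const, smul_eq_mul, mul_one, measureReal_def,
      ← hγ1, Measure.map_apply measurable_fst measurableSet_Ici]
  have hB : ∫ z, IB z ∂γ = (m2 (Ici t)).toReal := by
    rw [hIB, MeasureTheory.integral_indicator hmB, setIntegral_const, smul_eq_mul, mul_one, measureReal_def,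
      ← hγ2, Measure.map_apply measurable_snd measurableSet_Ici]
  rw [hAB, hA, hB]
  simp only [probReal_univ, measure_univ, ENNReal.toReal_one, smul_eq_mul, mul_one]
  ring

lemma survival_le
    (γ : Measure (ℝ × ℝ)) [IsProbabilityMeasure γ]
    (hγ1 : γ.map Prod.fst = m1) (hγ2 : γ.map Prod.snd = m2) (s t : ℝ) :
    γ (Ici s ×ˢ Ici t) ≤ min (m1 (Ici s)) (m2 (Ici t)) := by
  refine le_min ?_ ?_
  · rw [← hγ1, Measure.map_apply measurable_fst measurableSet_Ici]
    exact measure_mono (fun z hz => hz.1)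
  · rw [← hγ2, Measure.map_apply measurable_snd measurableSet_Ici]
    exact measure_mono (fun z hz => hz.2)

end Coupling

section GammaStar

variable (μ ν : Measure ℝ) [IsProbabilityMeasure μ] [IsProbabilityMeasure ν]

/-- the comonotone (quantile) coupling -/
def gammaStar : Measure (ℝ × ℝ) :=
  Measure.map (fun z => (qext μ z, qext ν z)) (volume.restrict (Ioo (0:ℝ) 1))

lemma measurable_qpair : Measurable (fun z => (qext μ z, qext ν z)) :=
  (measurable_qext μ).prodMk (measurable_qext ν)

instance : IsProbabilityMeasure (gammaStar μ ν) :=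
  Measure.isProbabilityMeasure_map (measurable_qpair μ ν).aemeasurable

lemma gammaStar_fst : (gammaStar μ ν).map Prod.fst = μ := by
  rw [gammaStar, Measure.map_map measurable_fst (measurable_qpair μ ν)]
  exact map_qext μ

lemma gammaStar_snd : (gammaStar μ ν).map Prod.snd = ν := by
  rw [gammaStar, Measure.map_map measurable_snd (measurable_qpair μ ν)]
  exact map_qext ν

lemma survival_star (s t : ℝ) :
    gammaStar μ ν (Ici s ×ˢ Ici t) = min (μ (Ici s)) (ν (Ici t)) := by
  have hmAB : MeasurableSet (Ici s ×ˢ Ici t : Set (ℝ × ℝ)) :=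
    measurableSet_Ici.prod measurableSet_Ici
  rw [gammaStar, Measure.map_apply (measurable_qpair μ ν) hmAB,
    Measure.restrict_apply ((measurable_qpair μ ν) hmAB)]
  set A : Set ℝ := qext μ ⁻¹' Ici s ∩ Ioo 0 1 with hA
  set B : Set ℝ := qext ν ⁻¹' Ici t ∩ Ioo 0 1 with hB
  have hAB : (fun z => (qext μ z, qext ν z)) ⁻¹' (Ici s ×ˢ Ici t) ∩ Ioo 0 1 = A ∩ B := by
    rw [hA, hB]
    ext z
    simp only [mem_inter_iff, mem_preimage, mem_prod, mem_Ici]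
    tauto
  rw [hAB]
  have hup : ∀ (κ : Measure ℝ) (_ : IsProbabilityMeasure κ) (c : ℝ) (z₁ z₂ : ℝ),
      z₁ ∈ Ioo (0:ℝ) 1 → z₂ ∈ Ioo (0:ℝ) 1 → z₁ ≤ z₂ → c ≤ qext κ z₁ → c ≤ qext κ z₂ := by
    intro κ hκ c z₁ z₂ h₁ h₂ h hc
    rw [qext_eq_quant κ h₁] at hc
    rw [qext_eq_quant κ h₂]
    exact le_trans hc (quant_monotoneOn κ h₁ h₂ h)
  have hnest : A ⊆ B ∨ B ⊆ A := by
    by_contra hcon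
    push_neg at hcon
    obtain ⟨a, haA, haB⟩ := not_subset.mp hcon.1
    obtain ⟨b, hbB, hbA⟩ := not_subset.mp hcon.2
    rcases le_total a b with hab | hab
    · exact hbA ⟨hup μ inferInstance s a b haA.2 hbB.2 hab haA.1, hbB.2⟩
    · exact haB ⟨hup ν inferInstance t b a hbB.2 haA.2 hab hbB.1, haA.2⟩
  have hvolA : volume A = μ (Ici s) := by
    conv_rhs => rw [← map_qext μ]
    rw [Measure.map_apply (measurable_qext μ) measurableSet_Ici,
      Measure.restrict_apply ((measurable_qext μ) measurableSet_Ici)]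
  have hvolB : volume B = ν (Ici t) := by
    conv_rhs => rw [← map_qext ν]
    rw [Measure.map_apply (measurable_qext ν) measurableSet_Ici,
      Measure.restrict_apply ((measurable_qext ν) measurableSet_Ici)]
  rcases hnest with h | h
  · rw [inter_eq_left.mpr h, hvolA]
    exact (min_eq_left (by rw [← hvolA, ← hvolB]; exact measure_mono h)).symm
  · rw [inter_eq_right.mpr h, hvolB]
    exact (min_eq_right (by rw [← hvolA, ← hvolB]; exact measure_mono h)).symm

lemma cost_star_le (hp : 1 ≤ p)
    (h1 : Integrable (phi p) μ) (h2 : Integrable (phi p) ν)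
    (γ : Measure (ℝ × ℝ)) [IsProbabilityMeasure γ]
    (hγ1 : γ.map Prod.fst = μ) (hγ2 : γ.map Prod.snd = ν) :
    ∫ z, phi p (z.1 - z.2) ∂(gammaStar μ ν) ≤ ∫ z, phi p (z.1 - z.2) ∂γ := by
  rw [coupling_identity hp h1 h2 γ hγ1 hγ2,
    coupling_identity hp h1 h2 (gammaStar μ ν) (gammaStar_fst μ ν) (gammaStar_snd μ ν)]
  have key : ∫ st, (∫ z : ℝ × ℝ, e z.1 st.1 * e z.2 st.2 ∂γ) ∂(rho p hp)
      ≤ ∫ st, (∫ z : ℝ × ℝ, e z.1 st.1 * e z.2 st.2 ∂(gammaStar μ ν)) ∂(rho p hp) := by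
    apply MeasureTheory.integral_mono
    · exact (integrable_F hp h1 h2 γ hγ1 hγ2).integral_prod_right
    · exact (integrable_F hp h1 h2 (gammaStar μ ν) (gammaStar_fst μ ν)
        (gammaStar_snd μ ν)).integral_prod_right
    · intro st
      dsimp only
      rw [integral_ee_coupling γ hγ1 hγ2 st.1 st.2,
        integral_ee_coupling (gammaStar μ ν) (gammaStar_fst μ ν) (gammaStar_snd μ ν) st.1 st.2]
      have hle : (γ (Ici st.1 ×ˢ Ici st.2)).toReal
          ≤ ((gammaStar μ ν) (Ici st.1 ×ˢ Ici st.2)).toReal := by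
        apply ENNReal.toReal_mono (measure_ne_top _ _)
        rw [survival_star μ ν st.1 st.2]
        exact survival_le γ hγ1 hγ2 st.1 st.2
      linarith
  linarith

lemma cost_star_eq (hp : 1 ≤ p) :
    ∫ z, phi p (z.1 - z.2) ∂(gammaStar μ ν)
      = ∫ z in Ioo (0:ℝ) 1, phi p (qext μ z - qext ν z) := by
  have hsm : AEStronglyMeasurable (fun z : ℝ × ℝ => phi p (z.1 - z.2))
      (Measure.map (fun z => (qext μ z, qext ν z)) (volume.restrict (Ioo (0:ℝ) 1))) :=
    ((phi_cont hp).comp (continuous_fst.sub continuous_snd)).aestronglyMeasurable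
  rw [gammaStar, integral_map (measurable_qpair μ ν).aemeasurable hsm]

end GammaStar

end W1D

open W1D in
/-- Closed form of the one-dimensional `p`-Wasserstein distance via quantile functions. -/
theorem one_dim_wasserstein_closed_form (p : ℝ) (hp : 1 ≤ p)
    (μ ν : Measure ℝ) [IsProbabilityMeasure μ] [IsProbabilityMeasure ν]
    (hμm : Integrable (fun x => |x| ^ p) μ)
    (hνm : Integrable (fun x => |x| ^ p) ν) :
    (sInf {c : ℝ | ∃ γ : Measure (ℝ × ℝ),
        IsProbabilityMeasure γ ∧ γ.map Prod.fst = μ ∧ γ.map Prod.snd = ν ∧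
        c = ∫ z, |z.1 - z.2| ^ p ∂γ}) ^ ((1:ℝ)/p)
      = (∫ z in Set.Icc (0:ℝ) 1,
          |sInf {x : ℝ | z ≤ (μ (Set.Iic x)).toReal}
            - sInf {x : ℝ | z ≤ (ν (Set.Iic x)).toReal}| ^ p) ^ ((1:ℝ)/p) := by
  have h1 : Integrable (phi p) μ := hμm
  have h2 : Integrable (phi p) ν := hνm
  set S := {c : ℝ | ∃ γ : Measure (ℝ × ℝ),
      IsProbabilityMeasure γ ∧ γ.map Prod.fst = μ ∧ γ.map Prod.snd = ν ∧
      c = ∫ z, |z.1 - z.2| ^ p ∂γ} with hS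
  set cstar := ∫ z : ℝ × ℝ, phi p (z.1 - z.2) ∂(gammaStar μ ν) with hcstar
  have hmem : cstar ∈ S :=
    ⟨gammaStar μ ν, inferInstance, gammaStar_fst μ ν, gammaStar_snd μ ν, rfl⟩
  have hlb : ∀ c ∈ S, cstar ≤ c := by
    rintro c ⟨γ, hγp, hγ1, hγ2, rfl⟩
    haveI := hγp
    exact cost_star_le μ ν hp h1 h2 γ hγ1 hγ2
  have hsInf : sInf S = cstar :=
    le_antisymm (csInf_le ⟨cstar, hlb⟩ hmem) (le_csInf ⟨cstar, hmem⟩ hlb)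
  rw [hsInf]
  congr 1
  rw [hcstar, cost_star_eq μ ν hp]
  rw [show (volume.restrict (Set.Icc (0:ℝ) 1)) = volume.restrict (Ioo (0:ℝ) 1) from
    (Measure.restrict_congr_set Ioo_ae_eq_Icc).symm]
  apply setIntegral_congr_fun measurableSet_Ioo
  intro z hz
  dsimp only
  rw [qext_eq_quant μ hz, qext_eq_quant ν hz]
  rfl
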